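/- arXiv:2502.04112 — 2 statements merged into one kernel-verified Lean document; each statement's English description precedes it below -/
import Mathlib

section
/- For real matrices X (m×n), Z (n×p) and Y (p×q), the triple product admits the star-product representation X Z Y = Z ⋆ (vec(X) · vec(Yᵀ)ᵀ), where vec(X)·vec(Yᵀ)ᵀ is the mn×pq matrix regarded as an n×p array of m×q blocks. -/
open Matrix Kronecker
open scoped BigOperators

noncomputable section

/-- Column-stacking vectorization: `vecm X (j, i) = X i j`. -/
def vecm {m n : ℕ} (X : Matrix (Fin m) (Fin n) ℝ) : Fin n × Fin m → ℝ := fun p => X p.2 p.1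

/-- Star product of an `m × n` matrix with an `mp × nq` matrix regarded as an `m × n`
array of `p × q` blocks. -/
def starProd {m n p q : ℕ} (A : Matrix (Fin m) (Fin n) ℝ)
    (B : Matrix (Fin m × Fin p) (Fin n × Fin q) ℝ) : Matrix (Fin p) (Fin q) ℝ :=
  Matrix.of fun r s => ∑ i, ∑ j, A i j * B (i, r) (j, s)

/-- The special partition `A^{[i,j]}` of an `mp × nq` matrix. -/
def spart {m n p q : ℕ} (A : Matrix (Fin m × Fin p) (Fin n × Fin q) ℝ) (i : Fin p) (j : Fin q) :
    Matrix (Fin m) (Fin n) ℝ := Matrix.of fun r s => A (r, i) (s, j)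

/-- The commutation matrix `K_{mn}`. -/
def commM (m n : ℕ) : Matrix (Fin m × Fin n) (Fin n × Fin m) ℝ :=
  ∑ i : Fin m, ∑ j : Fin n,
    (Matrix.single i j (1 : ℝ)) ⊗ₖ (Matrix.single i j (1 : ℝ))ᵀ

/-- equation (A.3): `X Z Y = Z ⋆ (vec(X)·vec(Yᵀ)ᵀ)`. -/
theorem triple_product_star {m n p q : ℕ} (X : Matrix (Fin m) (Fin n) ℝ)
    (Z : Matrix (Fin n) (Fin p) ℝ) (Y : Matrix (Fin p) (Fin q) ℝ) :
    X * Z * Y = starProd Z (Matrix.vecMulVec (vecm X) (vecm Yᵀ)) := by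
  ext r s
  simp only [starProd, Matrix.of_apply, Matrix.vecMulVec_apply, vecm, Matrix.mul_apply,
    Matrix.transpose_apply, Finset.sum_mul]
  rw [Finset.sum_comm]
  exact Finset.sum_congr rfl fun i _ => Finset.sum_congr rfl fun j _ => by ring

end
end

section
/- Let M be an mp×nq real matrix, and let A (a×m), B (n×b), X (c×p), Y (q×d) be real matrices. Then (A ⊗ X) · M · (B ⊗ Y) = Σ_{i=1}^p Σ_{j=1}^q (A M^{[i,j]} B) ⊗ (X E^{(i,j)}_{p,q} Y). -/
open Matrix Kronecker
open scoped BigOperators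

noncomputable section

/-- sandwiching a partitioned matrix between Kronecker products. -/
theorem kronecker_sandwich {m n p q a b c d : ℕ}
    (M : Matrix (Fin m × Fin p) (Fin n × Fin q) ℝ)
    (A : Matrix (Fin a) (Fin m) ℝ) (B : Matrix (Fin n) (Fin b) ℝ)
    (X : Matrix (Fin c) (Fin p) ℝ) (Y : Matrix (Fin q) (Fin d) ℝ) :
    (A ⊗ₖ X) * M * (B ⊗ₖ Y) =
      ∑ i : Fin p, ∑ j : Fin q,
        (A * spart M i j * B) ⊗ₖ (X * Matrix.single i j (1 : ℝ) * Y) := by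
  have hM : M = ∑ i : Fin p, ∑ j : Fin q, (spart M i j) ⊗ₖ Matrix.single i j (1 : ℝ) := by
    ext ⟨r, i'⟩ ⟨s, j'⟩
    simp [spart, Matrix.single, Matrix.sum_apply, ite_and, mul_ite]
  conv_lhs => rw [hM]
  rw [Matrix.mul_sum, Matrix.sum_mul]
  refine Finset.sum_congr rfl fun i _ => ?_
  rw [Matrix.mul_sum, Matrix.sum_mul]
  refine Finset.sum_congr rfl fun j _ => ?_
  rw [Matrix.mul_kronecker_mul, Matrix.mul_kronecker_mul]

end
end
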